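/- Let n ≥ 1, a ∈ ℝⁿ \ {0}, and x ∈ ℝⁿ \ ℝa. Let G be the group generated by f(x) = x + a, g(x) = −x + a, and h(x) = x + √2·a. Then the closure of G(0) equals the line ℝa (which is connected), while the closure of G(x) equals (x + ℝa) ∪ (−x + ℝa), which is not connected; in particular, the closures of G(0) and G(x) are not homeomorphic. -/

import Mathlib

open Set

lemma denseS' : Dense ((AddSubgroup.closure {1, Real.sqrt 2} : AddSubgroup ℝ) : Set ℝ) := by
  rcases AddSubgroup.dense_or_cyclic (AddSubgroup.closure {1, Real.sqrt 2}) with h | ⟨b, hb⟩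
  · exact h
  · exfalso
    have h1 : (1 : ℝ) ∈ AddSubgroup.closure ({1, Real.sqrt 2} : Set ℝ) :=
      AddSubgroup.subset_closure (by simp)
    have h2 : Real.sqrt 2 ∈ AddSubgroup.closure ({1, Real.sqrt 2} : Set ℝ) :=
      AddSubgroup.subset_closure (by simp)
    rw [hb, AddSubgroup.mem_closure_singleton] at h1 h2
    obtain ⟨k, hk⟩ := h1
    obtain ⟨m, hm⟩ := h2
    have hk0 : (k : ℝ) ≠ 0 := by
      rintro h
      rw [zsmul_eq_mul, h, zero_mul] at hk
      exact one_ne_zero hk.symm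
    apply irrational_sqrt_two
    refine ⟨(m : ℚ) / (k : ℚ), ?_⟩
    rw [zsmul_eq_mul] at hk hm
    have hb' : b = 1 / (k : ℝ) := by field_simp; linarith [hk]
    rw [← hm, hb']
    push_cast
    field_simp

theorem stmt_17 {n : ℕ} (hn : 1 ≤ n) (a : Fin n → ℝ) (ha : a ≠ 0)
    (x : Fin n → ℝ) (hx : x ∉ {y : Fin n → ℝ | ∃ t : ℝ, y = t • a})
    (f g h : Equiv.Perm (Fin n → ℝ))
    (hf : ∀ z, f z = z + a) (hg : ∀ z, g z = -z + a)
    (hh : ∀ z, h z = z + Real.sqrt 2 • a)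
    (G : Subgroup (Equiv.Perm (Fin n → ℝ))) (hG : G = Subgroup.closure {f, g, h}) :
    closure {z | ∃ φ ∈ G, φ 0 = z} = {y : Fin n → ℝ | ∃ t : ℝ, y = t • a} ∧
    IsConnected (closure {z | ∃ φ ∈ G, φ 0 = z}) ∧
    closure {z | ∃ φ ∈ G, φ x = z} =
      {y | ∃ t : ℝ, y = x + t • a} ∪ {y | ∃ t : ℝ, y = -x + t • a} ∧
    ¬ IsConnected (closure {z | ∃ φ ∈ G, φ x = z}) ∧
    IsEmpty ((closure {z | ∃ φ ∈ G, φ 0 = z}) ≃ₜ (closure {z | ∃ φ ∈ G, φ x = z})) := by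
  subst hG
  set S : AddSubgroup ℝ := AddSubgroup.closure {1, Real.sqrt 2} with hS
  have h1S : (1 : ℝ) ∈ S := AddSubgroup.subset_closure (by simp)
  have h2S : Real.sqrt 2 ∈ S := AddSubgroup.subset_closure (by simp)
  -- forward characterization of elements of G
  have key : ∀ φ ∈ Subgroup.closure {f, g, h}, ∃ c ∈ S,
      (∀ z, φ z = z + c • a) ∨ (∀ z, φ z = -z + c • a) := by
    intro φ hφ
    induction hφ using Subgroup.closure_induction with
    | mem ψ hψ =>
      simp only [Set.mem_insert_iff, Set.mem_singleton_iff] at hψ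
      rcases hψ with rfl | rfl | rfl
      · exact ⟨1, h1S, Or.inl fun z => by rw [hf z, one_smul]⟩
      · exact ⟨1, h1S, Or.inr fun z => by rw [hg z, one_smul]⟩
      · exact ⟨Real.sqrt 2, h2S, Or.inl fun z => hh z⟩
    | one => exact ⟨0, zero_mem S, Or.inl fun z => by simp⟩
    | mul φ ψ _ _ ihφ ihψ =>
      obtain ⟨c, hc, Hc⟩ := ihφ
      obtain ⟨d, hd, Hd⟩ := ihψ
      rcases Hc with H1 | H1 <;> rcases Hd with H2 | H2
      · exact ⟨c + d, add_mem hc hd, Or.inl fun z => by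
          rw [Equiv.Perm.mul_apply, H2 z, H1 _, add_smul]; abel⟩
      · exact ⟨c + d, add_mem hc hd, Or.inr fun z => by
          rw [Equiv.Perm.mul_apply, H2 z, H1 _, add_smul]; abel⟩
      · exact ⟨c - d, sub_mem hc hd, Or.inr fun z => by
          rw [Equiv.Perm.mul_apply, H2 z, H1 _, sub_smul]; abel⟩
      · exact ⟨c - d, sub_mem hc hd, Or.inl fun z => by
          rw [Equiv.Perm.mul_apply, H2 z, H1 _, sub_smul]; abel⟩
    | inv φ _ ih =>
      obtain ⟨c, hc, Hc⟩ := ih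
      rcases Hc with H | H
      · refine ⟨-c, neg_mem hc, Or.inl fun z => φ.injective ?_⟩
        rw [Equiv.Perm.coe_inv, Equiv.apply_symm_apply, H _, neg_smul]
        abel
      · refine ⟨c, hc, Or.inr fun z => φ.injective ?_⟩
        rw [Equiv.Perm.coe_inv, Equiv.apply_symm_apply, H _]
        abel
  -- translations by c • a for c ∈ S are in G
  have trans : ∀ c ∈ S, ∃ φ ∈ Subgroup.closure {f, g, h}, ∀ z, φ z = z + c • a := by
    intro c hc
    induction hc using AddSubgroup.closure_induction with
    | mem t ht =>
      rcases ht with rfl | rfl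
      · exact ⟨f, Subgroup.subset_closure (by simp), fun z => by rw [hf z, one_smul]⟩
      · exact ⟨h, Subgroup.subset_closure (by simp), fun z => hh z⟩
    | zero => exact ⟨1, one_mem _, fun z => by simp⟩
    | add c d _ _ ihc ihd =>
      obtain ⟨φ, hφG, hφ⟩ := ihc
      obtain ⟨ψ, hψG, hψ⟩ := ihd
      exact ⟨φ * ψ, mul_mem hφG hψG, fun z => by
        rw [Equiv.Perm.mul_apply, hψ z, hφ _, add_smul]; abel⟩
    | neg c _ ihc =>
      obtain ⟨φ, hφG, hφ⟩ := ihc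
      refine ⟨φ⁻¹, inv_mem hφG, fun z => φ.injective ?_⟩
      rw [Equiv.Perm.coe_inv, Equiv.apply_symm_apply, hφ _, neg_smul]
      abel
  have transNeg : ∀ c ∈ S, ∃ φ ∈ Subgroup.closure {f, g, h}, ∀ z, φ z = -z + c • a := by
    intro c hc
    obtain ⟨τ, hτG, hτ⟩ := trans (c - 1) (sub_mem hc h1S)
    refine ⟨τ * g, mul_mem hτG (Subgroup.subset_closure (by simp)), fun z => ?_⟩
    rw [Equiv.Perm.mul_apply, hg z, hτ _, sub_smul, one_smul]
    abel
  -- orbit descriptions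
  have hO0 : {z | ∃ φ ∈ Subgroup.closure {f, g, h}, φ 0 = z}
      = (fun t : ℝ => t • a) '' (S : Set ℝ) := by
    ext z
    constructor
    · rintro ⟨φ, hφ, rfl⟩
      obtain ⟨c, hc, Hc⟩ := key φ hφ
      refine ⟨c, hc, ?_⟩
      rcases Hc with H | H <;> rw [H 0] <;> simp
    · rintro ⟨c, hc, rfl⟩
      obtain ⟨φ, hφ, hφ0⟩ := trans c hc
      exact ⟨φ, hφ, by rw [hφ0 0, zero_add]⟩
  have hOx : {z | ∃ φ ∈ Subgroup.closure {f, g, h}, φ x = z}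
      = ((fun t : ℝ => x + t • a) '' (S : Set ℝ)) ∪ ((fun t : ℝ => -x + t • a) '' (S : Set ℝ)) := by
    ext z
    constructor
    · rintro ⟨φ, hφ, rfl⟩
      obtain ⟨c, hc, Hc⟩ := key φ hφ
      rcases Hc with H | H
      · exact Or.inl ⟨c, hc, (H x).symm⟩
      · exact Or.inr ⟨c, hc, (H x).symm⟩
    · rintro (⟨c, hc, rfl⟩ | ⟨c, hc, rfl⟩)
      · obtain ⟨φ, hφ, hφx⟩ := trans c hc
        exact ⟨φ, hφ, hφx x⟩
      · obtain ⟨φ, hφ, hφx⟩ := transNeg c hc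
        exact ⟨φ, hφ, hφx x⟩
  -- topology
  have hCE : Topology.IsClosedEmbedding (fun t : ℝ => t • a) :=
    LinearMap.isClosedEmbedding_of_injective (f := LinearMap.toSpanSingleton ℝ (Fin n → ℝ) a)
      (LinearMap.ker_eq_bot.mpr (smul_left_injective ℝ ha))
  have hclS : closure (S : Set ℝ) = Set.univ := denseS'.closure_eq
  have hrange : Set.range (fun t : ℝ => t • a) = {y : Fin n → ℝ | ∃ t : ℝ, y = t • a} := by
    ext y; simp [eq_comm]
  have hline : closure ((fun t : ℝ => t • a) '' (S : Set ℝ))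
      = {y : Fin n → ℝ | ∃ t : ℝ, y = t • a} := by
    rw [hCE.closure_image_eq, hclS, Set.image_univ, hrange]
  have c1 : closure {z | ∃ φ ∈ Subgroup.closure {f, g, h}, φ 0 = z}
      = {y : Fin n → ℝ | ∃ t : ℝ, y = t • a} := by
    rw [hO0, hline]
  have hconn : IsConnected {y : Fin n → ℝ | ∃ t : ℝ, y = t • a} := by
    rw [← hrange]
    exact isConnected_range hCE.continuous
  have hlineW : ∀ w : Fin n → ℝ, closure ((fun t : ℝ => w + t • a) '' (S : Set ℝ))
      = {y : Fin n → ℝ | ∃ t : ℝ, y = w + t • a} := by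
    intro w
    have himg : (fun t : ℝ => w + t • a) '' (S : Set ℝ)
        = (Homeomorph.addLeft w) '' ((fun t : ℝ => t • a) '' (S : Set ℝ)) := by
      rw [Set.image_image]; rfl
    rw [himg, ← Homeomorph.image_closure, hline]
    ext y
    constructor
    · rintro ⟨u, ⟨t, rfl⟩, rfl⟩; exact ⟨t, rfl⟩
    · rintro ⟨t, rfl⟩; exact ⟨t • a, ⟨t, rfl⟩, rfl⟩
  have c3 : closure {z | ∃ φ ∈ Subgroup.closure {f, g, h}, φ x = z}
      = {y : Fin n → ℝ | ∃ t : ℝ, y = x + t • a} ∪ {y | ∃ t : ℝ, y = -x + t • a} := by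
    rw [hOx, closure_union, hlineW x, hlineW (-x)]
  -- disjointness of the two lines
  have hdisj : Disjoint {y : Fin n → ℝ | ∃ t : ℝ, y = x + t • a}
      {y : Fin n → ℝ | ∃ t : ℝ, y = -x + t • a} := by
    rw [Set.disjoint_left]
    rintro y ⟨t, rfl⟩ ⟨s, hs⟩
    apply hx
    refine ⟨(s - t) / 2, ?_⟩
    have h2 : x + x = s • a - t • a := by
      calc x + x = (x + t • a) + x - t • a := by abel
        _ = (-x + s • a) + x - t • a := by rw [hs]
        _ = s • a - t • a := by abel
    have h4 : (s - t) • a = (2 : ℝ) • x := by rw [sub_smul, ← h2, two_smul]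
    rw [div_eq_mul_inv, mul_comm, ← smul_smul, h4, smul_smul]
    norm_num
  -- each line is closed
  have hcl0 : IsClosed {y : Fin n → ℝ | ∃ t : ℝ, y = t • a} := by
    have hsp : {y : Fin n → ℝ | ∃ t : ℝ, y = t • a}
        = (Submodule.span ℝ {a} : Submodule ℝ (Fin n → ℝ)) := by
      ext y; simp [Submodule.mem_span_singleton, eq_comm]
    rw [hsp]
    exact Submodule.closed_of_finiteDimensional _
  have hclW : ∀ w : Fin n → ℝ, IsClosed {y : Fin n → ℝ | ∃ t : ℝ, y = w + t • a} := by
    intro w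
    have : {y : Fin n → ℝ | ∃ t : ℝ, y = w + t • a}
        = (Homeomorph.addLeft w) '' {y : Fin n → ℝ | ∃ t : ℝ, y = t • a} := by
      ext y
      constructor
      · rintro ⟨t, rfl⟩; exact ⟨t • a, ⟨t, rfl⟩, rfl⟩
      · rintro ⟨u, ⟨t, rfl⟩, rfl⟩; exact ⟨t, rfl⟩
    rw [this]
    exact (Homeomorph.addLeft w).isClosedMap _ hcl0
  have hnc : ¬ IsConnected (closure {z | ∃ φ ∈ Subgroup.closure {f, g, h}, φ x = z}) := by
    rintro ⟨hne, hpc⟩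
    rw [isPreconnected_iff_subset_of_fully_disjoint_closed isClosed_closure] at hpc
    rcases hpc _ _ (hclW x) (hclW (-x)) (by rw [c3]) hdisj with hsub | hsub
    · have hm : -x ∈ closure {z | ∃ φ ∈ Subgroup.closure {f, g, h}, φ x = z} := by
        rw [c3]; exact Or.inr ⟨0, by simp⟩
      exact Set.disjoint_left.mp hdisj (hsub hm) ⟨0, by simp⟩
    · have hm : x ∈ closure {z | ∃ φ ∈ Subgroup.closure {f, g, h}, φ x = z} := by
        rw [c3]; exact Or.inl ⟨0, by simp⟩
      exact Set.disjoint_left.mp hdisj ⟨0, by simp⟩ (hsub hm)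
  have hconn0 : IsConnected (closure {z | ∃ φ ∈ Subgroup.closure {f, g, h}, φ 0 = z}) := by
    rw [c1]; exact hconn
  refine ⟨c1, hconn0, c3, hnc, ?_⟩
  constructor
  intro e
  haveI : ConnectedSpace (closure {z | ∃ φ ∈ Subgroup.closure {f, g, h}, φ 0 = z}) :=
    isConnected_iff_connectedSpace.mp hconn0
  exact hnc (isConnected_iff_connectedSpace.mpr (e.surjective.connectedSpace e.continuous))
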